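/- arXiv:1607.05001 — 2 statements merged into one kernel-verified Lean document; each statement's English description precedes it below -/
import Mathlib

section
/- Let A ∈ {0,1}^{m×n} be a binary measurement matrix with no all-zero column. Then every stopping set T ⊆ V is a termatiko set of A: running the IPA on y = A·1_T yields μ^{(ℓ)}_v = 0 for every v ∈ V and every ℓ ≥ 0. -/
open scoped Classical
open Finset

variable {C V : Type*} [Fintype C] [Fintype V]

/-- The IPA lower/upper bounds `(μ^{(ℓ)}, M^{(ℓ)})` computed from measurement
matrix `A` and measurement vector `y`. -/
noncomputable def ipa (A : C → V → ℝ) (y : C → ℝ) : ℕ → (V → ℝ) × (V → ℝ)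
  | 0 => (fun _ => 0,
      fun v => sInf {r : ℝ | ∃ c, A c v ≠ 0 ∧ r = y c / A c v})
  | ℓ + 1 =>
      (fun v => sSup {r : ℝ | ∃ c, A c v ≠ 0 ∧
          r = max 0 ((y c - ∑ v' ∈ Finset.univ.filter (fun v' => v' ≠ v),
              A c v' * (ipa A y ℓ).2 v') / A c v)},
       fun v => sInf {r : ℝ | ∃ c, A c v ≠ 0 ∧
          r = (y c - ∑ v' ∈ Finset.univ.filter (fun v' => v' ≠ v),
              A c v' * (ipa A y ℓ).1 v') / A c v})

/-- IPA lower bound `μ^{(ℓ)}_v`. -/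
noncomputable def ipaMu (A : C → V → ℝ) (y : C → ℝ) (ℓ : ℕ) (v : V) : ℝ := (ipa A y ℓ).1 v

/-- IPA upper bound `M^{(ℓ)}_v`. -/
noncomputable def ipaM (A : C → V → ℝ) (y : C → ℝ) (ℓ : ℕ) (v : V) : ℝ := (ipa A y ℓ).2 v

/-- Neighbourhood `N(v)` of a variable node. -/
noncomputable def Nv (A : C → V → ℝ) (v : V) : Finset C := Finset.univ.filter fun c => A c v ≠ 0

/-- Neighbourhood `N(c)` of a measurement node. -/
noncomputable def Nc (A : C → V → ℝ) (c : C) : Finset V := Finset.univ.filter fun v => A c v ≠ 0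

/-- Neighbourhood `N(T)` of a set of variable nodes. -/
noncomputable def NT (A : C → V → ℝ) (T : Finset V) : Finset C :=
  Finset.univ.filter fun c => ∃ v ∈ T, A c v ≠ 0

/-- `N_T(c) = N(c) ∩ T`. -/
noncomputable def NTc (A : C → V → ℝ) (T : Finset V) (c : C) : Finset V :=
  T.filter fun v => A c v ≠ 0

/-- A stopping set: every neighbouring measurement node is connected at least twice to `T`. -/
def StoppingSet (A : C → V → ℝ) (T : Finset V) : Prop :=
  ∀ c ∈ NT A T, 2 ≤ (NTc A T c).card

/-- The set `S` of variable nodes outside `T` connected only to `N(T)`. -/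
noncomputable def Sset (A : C → V → ℝ) (T : Finset V) : Finset V :=
  Finset.univ.filter fun v => v ∉ T ∧ ∀ c, A c v ≠ 0 → c ∈ NT A T

/-- The termatiko condition on a set `T` of variable nodes. -/
def TermatikoCond (A : C → V → ℝ) (T : Finset V) : Prop :=
  ∀ c ∈ NT A T,
    (∃ v ∈ Sset A T, A c v ≠ 0) ∨
    2 ≤ ((NTc A T c).filter fun v => ∀ c', A c' v ≠ 0 → 2 ≤ (NTc A T c').card).card

/-- Real-valued indicator vector `1_T` of a set of variable nodes. -/
noncomputable def indVec (T : Finset V) : V → ℝ := fun v => if v ∈ T then 1 else 0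

/-- The measurement vector `A · 1_T`. -/
noncomputable def measT (A : C → V → ℝ) (T : Finset V) : C → ℝ :=
  fun c => ∑ v, A c v * indVec T v

/-- `T` is a termatiko set of `A`: the IPA run on `A · 1_T` keeps all lower bounds at zero. -/
def IsTermatiko (A : C → V → ℝ) (T : Finset V) : Prop :=
  ∀ (ℓ : ℕ) (v : V), ipaMu A (measT A T) ℓ v = 0

/-- `A` is a binary (0/1) matrix. -/
def Binary (A : C → V → ℝ) : Prop := ∀ c v, A c v = 0 ∨ A c v = 1

/-- `A` has no all-zero column. -/
def NoZeroCol (A : C → V → ℝ) : Prop := ∀ v, ∃ c, A c v ≠ 0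

/-- `A` has nonnegative entries. -/
def MatNonneg (A : C → V → ℝ) : Prop := ∀ c v, 0 ≤ A c v

lemma binary_nonneg' {A : C → V → ℝ} (hbin : Binary A) (c : C) (v : V) : 0 ≤ A c v := by
  rcases hbin c v with h | h <;> simp [h]

lemma measT_card {A : C → V → ℝ} (hbin : Binary A) (T : Finset V) (c : C) :
    measT A T c = ((NTc A T c).card : ℝ) := by
  classical
  unfold measT indVec NTc
  have h1 : ∑ v, A c v * (if v ∈ T then (1:ℝ) else 0) = ∑ v ∈ T, A c v := by
    simp [mul_ite, mul_one, mul_zero, Finset.sum_ite_mem]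
  have h2 : ∑ v ∈ T, A c v = ∑ v ∈ T, (if A c v ≠ 0 then (1:ℝ) else 0) := by
    refine Finset.sum_congr rfl fun v _ => ?_
    rcases hbin c v with h | h <;> simp [h]
  rw [h1, h2, Finset.card_filter]
  push_cast
  simp

lemma sSup_eq_zero_of {s : Set ℝ} (hne : s.Nonempty) (h : ∀ x ∈ s, x = 0) : sSup s = 0 := by
  have hs : s = {0} := Set.eq_singleton_iff_nonempty_unique_mem.mpr ⟨hne, h⟩
  rw [hs, csSup_singleton]

lemma key_ineq {A : C → V → ℝ} (hbin : Binary A) (T : Finset V) (hT : StoppingSet A T)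
    (M : V → ℝ) (hM2 : ∀ v ∈ T, (2:ℝ) ≤ M v) (hM0 : ∀ v, 0 ≤ M v)
    {c : C} {v : V} (hcv : A c v ≠ 0) :
    measT A T c - ∑ v' ∈ Finset.univ.filter (fun v' => v' ≠ v), A c v' * M v' ≤ 0 := by
  classical
  have hsub : ((NTc A T c).erase v) ⊆ Finset.univ.filter (fun v' => v' ≠ v) := by
    intro w hw
    simp only [Finset.mem_erase] at hw
    simp [hw.1]
  have hle : ∑ w ∈ (NTc A T c).erase v, A c w * M w
      ≤ ∑ v' ∈ Finset.univ.filter (fun v' => v' ≠ v), A c v' * M v' :=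
    Finset.sum_le_sum_of_subset_of_nonneg hsub (fun w _ _ =>
      mul_nonneg (binary_nonneg' hbin c w) (hM0 w))
  have hlow : (((NTc A T c).erase v).card : ℝ) * 2 ≤ ∑ w ∈ (NTc A T c).erase v, A c w * M w := by
    have := Finset.card_nsmul_le_sum ((NTc A T c).erase v) (fun w => A c w * M w) (2:ℝ) ?_
    · simpa [nsmul_eq_mul] using this
    · intro w hw
      have hw' : w ∈ NTc A T c := Finset.mem_of_mem_erase hw
      simp only [NTc, Finset.mem_filter] at hw'
      have hA1 : A c w = 1 := (hbin c w).resolve_left hw'.2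
      have h2 := hM2 w hw'.1
      show (2:ℝ) ≤ A c w * M w
      rw [hA1, one_mul]
      exact h2
  rw [measT_card hbin]
  by_cases hvT : v ∈ T
  · have hcNT : c ∈ NT A T := by
      simp only [NT, Finset.mem_filter, Finset.mem_univ, true_and]
      exact ⟨v, hvT, hcv⟩
    have hk : 2 ≤ (NTc A T c).card := hT c hcNT
    have hvNTc : v ∈ NTc A T c := by
      simp only [NTc, Finset.mem_filter]; exact ⟨hvT, hcv⟩
    have hcard : ((NTc A T c).erase v).card = (NTc A T c).card - 1 :=
      Finset.card_erase_of_mem hvNTc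
    have hcast : (((NTc A T c).erase v).card : ℝ) = ((NTc A T c).card : ℝ) - 1 := by
      rw [hcard]
      have h1 : 1 ≤ (NTc A T c).card := le_trans (by norm_num) hk
      push_cast [h1]
      ring
    have hk' : (2:ℝ) ≤ ((NTc A T c).card : ℝ) := by exact_mod_cast hk
    rw [hcast] at hlow
    linarith
  · have hvNTc : v ∉ NTc A T c := by
      simp only [NTc, Finset.mem_filter]; tauto
    rw [Finset.erase_eq_of_notMem hvNTc] at hlow hle
    have h0 : (0:ℝ) ≤ ((NTc A T c).card : ℝ) := by positivity
    linarith

/-- every stopping set of a binary measurement matrix is a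
termatiko set: the IPA run on `A·1_T` keeps all lower bounds at zero. -/
theorem stoppingSet_isTermatiko {m n : ℕ} (A : Fin m → Fin n → ℝ)
    (hbin : Binary A) (hcol : NoZeroCol A)
    (T : Finset (Fin n)) (hT : StoppingSet A T) :
    IsTermatiko A T := by
  classical
  have hbound2 : ∀ v ∈ T, ∀ (c : Fin m), A c v ≠ 0 → (2:ℝ) ≤ measT A T c := by
    intro v hvT c hc
    rw [measT_card hbin]
    have hcNT : c ∈ NT A T := by
      simp only [NT, Finset.mem_filter, Finset.mem_univ, true_and]
      exact ⟨v, hvT, hc⟩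
    exact_mod_cast hT c hcNT
  have hbound0 : ∀ (c : Fin m), (0:ℝ) ≤ measT A T c := by
    intro c
    rw [measT_card hbin]
    positivity
  have main : ∀ ℓ, (∀ v, (ipa A (measT A T) ℓ).1 v = 0) ∧
      (∀ v ∈ T, (2:ℝ) ≤ (ipa A (measT A T) ℓ).2 v) ∧
      (∀ v, (0:ℝ) ≤ (ipa A (measT A T) ℓ).2 v) := by
    intro ℓ
    induction ℓ with
    | zero =>
      refine ⟨fun v => rfl, ?_, ?_⟩
      · intro v hvT
        show _ ≤ sInf _
        apply le_csInf
        · obtain ⟨c, hc⟩ := hcol v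
          exact ⟨measT A T c / A c v, c, hc, rfl⟩
        · rintro r ⟨c, hc, rfl⟩
          have h1 : A c v = 1 := (hbin c v).resolve_left hc
          rw [h1, div_one]
          exact hbound2 v hvT c hc
      · intro v
        show _ ≤ sInf _
        apply le_csInf
        · obtain ⟨c, hc⟩ := hcol v
          exact ⟨measT A T c / A c v, c, hc, rfl⟩
        · rintro r ⟨c, hc, rfl⟩
          have h1 : A c v = 1 := (hbin c v).resolve_left hc
          rw [h1, div_one]
          exact hbound0 c
    | succ ℓ ih =>
      obtain ⟨ihμ, ihM2, ihM0⟩ := ih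
      refine ⟨?_, ?_, ?_⟩
      · intro v
        show sSup _ = 0
        apply sSup_eq_zero_of
        · obtain ⟨c, hc⟩ := hcol v
          exact ⟨_, ⟨c, hc, rfl⟩⟩
        · rintro r ⟨c, hc, rfl⟩
          have h1 : A c v = 1 := (hbin c v).resolve_left hc
          rw [h1, div_one]
          have hk := key_ineq hbin T hT _ ihM2 ihM0 hc
          exact max_eq_left hk
      · intro v hvT
        show _ ≤ sInf _
        apply le_csInf
        · obtain ⟨c, hc⟩ := hcol v
          exact ⟨_, c, hc, rfl⟩
        · rintro r ⟨c, hc, rfl⟩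
          have h1 : A c v = 1 := (hbin c v).resolve_left hc
          rw [h1, div_one]
          simp only [ihμ, mul_zero, Finset.sum_const_zero, sub_zero]
          exact hbound2 v hvT c hc
      · intro v
        show _ ≤ sInf _
        apply le_csInf
        · obtain ⟨c, hc⟩ := hcol v
          exact ⟨_, c, hc, rfl⟩
        · rintro r ⟨c, hc, rfl⟩
          have h1 : A c v = 1 := (hbin c v).resolve_left hc
          rw [h1, div_one]
          simp only [ihμ, mul_zero, Finset.sum_const_zero, sub_zero]
          exact hbound0 c
  intro ℓ v
  exact (main ℓ).1 v
end

section
/- Let A ∈ {0,1}^{m×n} be a binary measurement matrix with no all-zero column, let x ∈ ℝ^n_{≥0}, and let y = Ax. The IPA fails to fully recover x — i.e., for every iteration ℓ ≥ 0 there exists a variable node v with μ^{(ℓ)}_v ≠ x_v — if and only if supp(x) contains a nonempty termatiko set of A. -/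
open scoped Classical
open Finset

variable {C V : Type*} [Fintype C] [Fintype V]

section AuxIPA
set_option linter.unusedSectionVars false

variable {A : C → V → ℝ} {y : C → ℝ}

lemma mem_Nv {c : C} {v : V} : c ∈ Nv A v ↔ A c v ≠ 0 := by simp [Nv]

lemma Nv_nonempty (hcol : NoZeroCol A) (v : V) : (Nv A v).Nonempty := by
  obtain ⟨c, hc⟩ := hcol v
  exact ⟨c, mem_Nv.2 hc⟩

lemma Aone (hbin : Binary A) {c : C} {v : V} (h : A c v ≠ 0) : A c v = 1 :=
  (hbin c v).resolve_left h

/-- row sum over `v' ≠ v`. -/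
noncomputable def rowSum (A : C → V → ℝ) (g : V → ℝ) (c : C) (v : V) : ℝ :=
  ∑ v' ∈ Finset.univ.filter (fun v' => v' ≠ v), A c v' * g v'

lemma rowSum_split (A : C → V → ℝ) (g : V → ℝ) (c : C) (v : V) :
    (∑ v', A c v' * g v') = A c v * g v + rowSum A g c v := by
  rw [rowSum, Finset.filter_ne' Finset.univ v,
    Finset.add_sum_erase Finset.univ (fun v' => A c v' * g v') (Finset.mem_univ v)]

lemma sInf_eq_inf' {v : V} (h : (Nv A v).Nonempty) (f : C → ℝ) :
    sInf {r : ℝ | ∃ c, A c v ≠ 0 ∧ r = f c} = (Nv A v).inf' h f := by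
  rw [Finset.inf'_eq_csInf_image]
  congr 1
  ext r
  constructor
  · rintro ⟨c, hc, rfl⟩; exact ⟨c, mem_Nv.2 hc, rfl⟩
  · rintro ⟨c, hc, rfl⟩; exact ⟨c, mem_Nv.1 hc, rfl⟩

lemma sSup_eq_sup' {v : V} (h : (Nv A v).Nonempty) (f : C → ℝ) :
    sSup {r : ℝ | ∃ c, A c v ≠ 0 ∧ r = f c} = (Nv A v).sup' h f := by
  rw [Finset.sup'_eq_csSup_image]
  congr 1
  ext r
  constructor
  · rintro ⟨c, hc, rfl⟩; exact ⟨c, mem_Nv.2 hc, rfl⟩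
  · rintro ⟨c, hc, rfl⟩; exact ⟨c, mem_Nv.1 hc, rfl⟩

lemma ipaMu_zero (v : V) : ipaMu A y 0 v = 0 := rfl

lemma ipaM_zero {v : V} (h : (Nv A v).Nonempty) :
    ipaM A y 0 v = (Nv A v).inf' h (fun c => y c / A c v) := by
  rw [ipaM, ipa]
  exact sInf_eq_inf' h _

lemma ipaM_succ {v : V} (h : (Nv A v).Nonempty) (ℓ : ℕ) :
    ipaM A y (ℓ + 1) v
      = (Nv A v).inf' h (fun c => (y c - rowSum A (ipaMu A y ℓ) c v) / A c v) := by
  rw [ipaM, ipa]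
  exact sInf_eq_inf' h _

lemma ipaMu_succ {v : V} (h : (Nv A v).Nonempty) (ℓ : ℕ) :
    ipaMu A y (ℓ + 1) v
      = (Nv A v).sup' h (fun c => max 0 ((y c - rowSum A (ipaM A y ℓ) c v) / A c v)) := by
  rw [ipaMu, ipa]
  exact sSup_eq_sup' h _

lemma ipaM_succ' (hbin : Binary A) {v : V} (h : (Nv A v).Nonempty) (ℓ : ℕ) :
    ipaM A y (ℓ + 1) v
      = (Nv A v).inf' h (fun c => y c - rowSum A (ipaMu A y ℓ) c v) := by
  rw [ipaM_succ h ℓ]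
  exact Finset.inf'_congr h rfl (fun c hc => by rw [Aone hbin (mem_Nv.1 hc), div_one])

lemma ipaMu_succ' (hbin : Binary A) {v : V} (h : (Nv A v).Nonempty) (ℓ : ℕ) :
    ipaMu A y (ℓ + 1) v
      = (Nv A v).sup' h (fun c => max 0 (y c - rowSum A (ipaM A y ℓ) c v)) := by
  rw [ipaMu_succ h ℓ]
  exact Finset.sup'_congr h rfl (fun c hc => by rw [Aone hbin (mem_Nv.1 hc), div_one])

lemma ipaM_zero' (hbin : Binary A) {v : V} (h : (Nv A v).Nonempty) :
    ipaM A y 0 v = (Nv A v).inf' h (fun c => y c) := by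
  rw [ipaM_zero h]
  exact Finset.inf'_congr h rfl (fun c hc => by rw [Aone hbin (mem_Nv.1 hc), div_one])

lemma ipaMu_nonneg (hcol : NoZeroCol A) (ℓ : ℕ) (v : V) : 0 ≤ ipaMu A y ℓ v := by
  cases ℓ with
  | zero => exact le_of_eq (ipaMu_zero v).symm
  | succ ℓ =>
      have h := Nv_nonempty hcol v
      rw [ipaMu_succ h ℓ]
      obtain ⟨c, hc⟩ := h
      exact le_trans (le_max_left 0 _)
        (Finset.le_sup' (fun c => max 0 ((y c - rowSum A (ipaM A y ℓ) c v) / A c v)) hc)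

end AuxIPA
section AuxIPA2
set_option linter.unusedSectionVars false

variable {A : C → V → ℝ} {y : C → ℝ} {x : V → ℝ}

lemma Anonneg (hbin : Binary A) (c : C) (v : V) : 0 ≤ A c v := by
  rcases hbin c v with h | h <;> rw [h] <;> norm_num

lemma rowSum_nonneg (hbin : Binary A) {g : V → ℝ} (hg : ∀ v, 0 ≤ g v) (c : C) (v : V) :
    0 ≤ rowSum A g c v :=
  Finset.sum_nonneg fun v' _ => mul_nonneg (Anonneg hbin c v') (hg v')

lemma rowSum_mono (hbin : Binary A) {g g' : V → ℝ} (hg : ∀ v, g v ≤ g' v) (c : C) (v : V) :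
    rowSum A g c v ≤ rowSum A g' c v :=
  Finset.sum_le_sum fun v' _ => mul_le_mul_of_nonneg_left (hg v') (Anonneg hbin c v')

lemma rowSum_zero (c : C) (v : V) : rowSum A (fun _ => (0 : ℝ)) c v = 0 := by
  simp [rowSum]

lemma rowSum_sub (g g' : V → ℝ) (c : C) (v : V) :
    rowSum A (fun v' => g v' - g' v') c v = rowSum A g c v - rowSum A g' c v := by
  simp [rowSum, mul_sub, Finset.sum_sub_distrib]

/-- Key algebraic identity: `y_c - Σ_{v'≠v} a_{cv'} g_{v'} = x_v + Σ_{v'≠v} a_{cv'}(x_{v'}-g_{v'})`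
when `y = A x` and `a_{cv} = 1`. -/
lemma key_sum (hbin : Binary A) (hy : ∀ c, y c = ∑ v, A c v * x v)
    {c : C} {v : V} (hc : A c v ≠ 0) (g : V → ℝ) :
    y c - rowSum A g c v = x v + rowSum A (fun v' => x v' - g v') c v := by
  rw [hy c, rowSum_split A x c v, Aone hbin hc, one_mul, rowSum_sub]
  ring

lemma myInf'_mono {s : Finset C} (H : s.Nonempty) {f g : C → ℝ} (h : ∀ b ∈ s, f b ≤ g b) :
    s.inf' H f ≤ s.inf' H g :=
  Finset.le_inf' H g fun b hb => le_trans (Finset.inf'_le f hb) (h b hb)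

/-- `μ^ℓ ≤ x ≤ M^ℓ`. -/
lemma ipa_bounds (hbin : Binary A) (hcol : NoZeroCol A) (hx : ∀ v, 0 ≤ x v)
    (hy : ∀ c, y c = ∑ v, A c v * x v) (ℓ : ℕ) :
    (∀ v, ipaMu A y ℓ v ≤ x v) ∧ (∀ v, x v ≤ ipaM A y ℓ v) := by
  induction ℓ with
  | zero =>
      refine ⟨fun v => le_of_eq_of_le (ipaMu_zero v) (hx v), fun v => ?_⟩
      rw [ipaM_zero' hbin (Nv_nonempty hcol v)]
      refine Finset.le_inf' _ _ fun c hc => ?_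
      have h := key_sum hbin hy (mem_Nv.1 hc) (fun _ => (0 : ℝ))
      rw [rowSum_zero, sub_zero] at h
      rw [h]
      have : 0 ≤ rowSum A (fun v' => x v' - 0) c v :=
        rowSum_nonneg hbin (fun v' => by simpa using hx v') c v
      linarith
  | succ ℓ ih =>
      obtain ⟨ihμ, ihM⟩ := ih
      constructor
      · intro v
        rw [ipaMu_succ' hbin (Nv_nonempty hcol v) ℓ]
        refine Finset.sup'_le _ _ fun c hc => max_le (hx v) ?_
        rw [key_sum hbin hy (mem_Nv.1 hc) (ipaM A y ℓ)]
        have : rowSum A (fun v' => x v' - ipaM A y ℓ v') c v ≤ 0 := by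
          have := rowSum_mono hbin (g := fun v' => x v' - ipaM A y ℓ v')
            (g' := fun _ => (0:ℝ)) (fun v' => by simpa using ihM v') c v
          rwa [rowSum_zero] at this
        linarith
      · intro v
        rw [ipaM_succ' hbin (Nv_nonempty hcol v) ℓ]
        refine Finset.le_inf' _ _ fun c hc => ?_
        rw [key_sum hbin hy (mem_Nv.1 hc) (ipaMu A y ℓ)]
        have : 0 ≤ rowSum A (fun v' => x v' - ipaMu A y ℓ v') c v :=
          rowSum_nonneg hbin (fun v' => by simpa using ihμ v') c v
        linarith

/-- `μ` is nondecreasing and `M` nonincreasing in `ℓ`. -/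
lemma ipa_mono (hbin : Binary A) (hcol : NoZeroCol A) (ℓ : ℕ) :
    (∀ v, ipaMu A y ℓ v ≤ ipaMu A y (ℓ + 1) v) ∧
      (∀ v, ipaM A y (ℓ + 1) v ≤ ipaM A y ℓ v) := by
  induction ℓ with
  | zero =>
      refine ⟨fun v => le_of_eq_of_le (ipaMu_zero v) (ipaMu_nonneg hcol 1 v), fun v => ?_⟩
      rw [ipaM_succ' hbin (Nv_nonempty hcol v) 0, ipaM_zero' hbin (Nv_nonempty hcol v)]
      refine le_of_eq (Finset.inf'_congr _ rfl fun c hc => ?_)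
      have : rowSum A (ipaMu A y 0) c v = 0 := by
        rw [show ipaMu A y 0 = fun _ => (0:ℝ) from funext fun v => ipaMu_zero v]
        exact rowSum_zero c v
      rw [this, sub_zero]
  | succ ℓ ih =>
      obtain ⟨ihμ, ihM⟩ := ih
      constructor
      · intro v
        rw [ipaMu_succ' hbin (Nv_nonempty hcol v) ℓ, ipaMu_succ' hbin (Nv_nonempty hcol v) (ℓ+1)]
        refine Finset.sup'_mono_fun fun c hc => max_le_max le_rfl ?_
        exact sub_le_sub_left (rowSum_mono hbin ihM c v) _
      · intro v
        rw [ipaM_succ' hbin (Nv_nonempty hcol v) ℓ, ipaM_succ' hbin (Nv_nonempty hcol v) (ℓ+1)]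
        exact myInf'_mono _ fun c hc => sub_le_sub_left (rowSum_mono hbin ihμ c v) _

lemma ipaMu_le_of_le (hbin : Binary A) (hcol : NoZeroCol A) {ℓ ℓ' : ℕ} (h : ℓ ≤ ℓ') (v : V) :
    ipaMu A y ℓ v ≤ ipaMu A y ℓ' v := by
  induction ℓ' with
  | zero => simp_all
  | succ ℓ' ih =>
      rcases Nat.lt_or_ge ℓ (ℓ' + 1) with h' | h'
      · exact le_trans (ih (Nat.lt_succ_iff.1 h')) ((ipa_mono hbin hcol ℓ').1 v)
      · have : ℓ = ℓ' + 1 := le_antisymm h h'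
        rw [this]

end AuxIPA2
section AuxIPA3
set_option linter.unusedSectionVars false

variable {A : C → V → ℝ} {y : C → ℝ} {x : V → ℝ} {T : Finset V}

lemma measT_eq_card (hbin : Binary A) (T : Finset V) (c : C) :
    measT A T c = ((NTc A T c).card : ℝ) := by
  have h1 : ∀ v, A c v * indVec T v = if v ∈ T ∧ A c v ≠ 0 then (1 : ℝ) else 0 := by
    intro v
    rcases hbin c v with h | h <;> by_cases hv : v ∈ T <;> simp [h, indVec, hv]
  have h2 : (Finset.univ.filter fun v => v ∈ T ∧ A c v ≠ 0) = NTc A T c := by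
    ext v; simp [NTc, and_comm]
  rw [measT, Finset.sum_congr rfl fun v _ => h1 v, Finset.sum_boole, h2]

lemma rowSum_indVec (hbin : Binary A) {c : C} {v : V} (hc : A c v ≠ 0) (T : Finset V) :
    rowSum A (indVec T) c v = measT A T c - indVec T v := by
  have h := rowSum_split A (indVec T) c v
  have : measT A T c = A c v * indVec T v + rowSum A (indVec T) c v := h
  rw [this, Aone hbin hc, one_mul]; ring

lemma rowSum_smul (ε : ℝ) (g : V → ℝ) (c : C) (v : V) :
    rowSum A (fun v' => ε * g v') c v = ε * rowSum A g c v := by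
  simp [rowSum, Finset.mul_sum, mul_left_comm]

lemma rowSum_eq_zero {g : V → ℝ} (hg : ∀ v, g v = 0) (c : C) (v : V) :
    rowSum A g c v = 0 := by simp [rowSum, hg]

/-- From termatiko-ness: every check is "covered" by the upper bounds. -/
lemma termatiko_check (hbin : Binary A) (hcol : NoZeroCol A) (hT : IsTermatiko A T)
    (ℓ : ℕ) {v : V} {c : C} (hc : c ∈ Nv A v) :
    measT A T c ≤ rowSum A (ipaM A (measT A T) ℓ) c v := by
  have h := hT (ℓ + 1) v
  rw [ipaMu_succ' hbin (Nv_nonempty hcol v) ℓ] at h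
  have h2 := Finset.le_sup'
    (fun c => max 0 (measT A T c - rowSum A (ipaM A (measT A T) ℓ) c v)) hc
  rw [h] at h2
  have := le_trans (le_max_right (0:ℝ) _) h2
  linarith

lemma ipaM_le_measT (hbin : Binary A) (hcol : NoZeroCol A) (hT : IsTermatiko A T)
    (ℓ : ℕ) {v : V} {c : C} (hc : c ∈ Nv A v) :
    ipaM A (measT A T) ℓ v ≤ measT A T c := by
  cases ℓ with
  | zero =>
      rw [ipaM_zero' hbin (Nv_nonempty hcol v)]
      exact Finset.inf'_le (fun c => measT A T c) hc
  | succ ℓ =>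
      rw [ipaM_succ' hbin (Nv_nonempty hcol v) ℓ]
      have h0 : rowSum A (ipaMu A (measT A T) ℓ) c v = 0 := rowSum_eq_zero (hT ℓ) c v
      have := Finset.inf'_le
        (fun c => measT A T c - rowSum A (ipaMu A (measT A T) ℓ) c v) hc
      rw [h0, sub_zero] at this
      exact this

/-- The ⇐ direction: a nonempty termatiko set inside the support makes the IPA fail. -/
lemma fails_of_termatiko (hbin : Binary A) (hcol : NoZeroCol A) (hx : ∀ v, 0 ≤ x v)
    (hy : ∀ c, y c = ∑ v, A c v * x v) (hTne : T.Nonempty) (hT : IsTermatiko A T)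
    (hTsupp : ∀ v ∈ T, x v ≠ 0) (ℓ : ℕ) : ∃ v, ipaMu A y ℓ v ≠ x v := by
  set z := measT A T with hz
  set ε := T.inf' hTne x with hεdef
  have hε : 0 < ε := by
    rw [hεdef, Finset.lt_inf'_iff]
    exact fun v hv => lt_of_le_of_ne (hx v) (Ne.symm (hTsupp v hv))
  have hεle : ∀ v ∈ T, ε ≤ x v := fun v hv => Finset.inf'_le x hv
  have hind : ∀ v, ε * indVec T v ≤ x v := by
    intro v
    by_cases hv : v ∈ T
    · simpa [indVec, hv] using hεle v hv
    · simpa [indVec, hv] using hx v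
  have hind0 : ∀ v, 0 ≤ x v - ε * indVec T v := fun v => by linarith [hind v]
  have main : ∀ ℓ, (∀ v, ipaMu A y ℓ v ≤ x v - ε * indVec T v) ∧
      (∀ v, x v + ε * (ipaM A z ℓ v - indVec T v) ≤ ipaM A y ℓ v) := by
    intro ℓ
    induction ℓ with
    | zero =>
        constructor
        · intro v; rw [ipaMu_zero]; exact hind0 v
        · intro v
          rw [ipaM_zero' (y := y) hbin (Nv_nonempty hcol v)]
          refine Finset.le_inf' _ _ fun c hc => ?_
          have hM0 : ipaM A z 0 v ≤ z c := ipaM_le_measT hbin hcol hT 0 hc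
          have hzc : rowSum A (indVec T) c v = z c - indVec T v :=
            rowSum_indVec hbin (mem_Nv.1 hc) T
          have hycx : y c = x v + rowSum A x c v := by
            have h := key_sum hbin hy (mem_Nv.1 hc) (fun _ => (0 : ℝ))
            rw [rowSum_zero, sub_zero] at h
            simpa using h
          have hrs : ε * rowSum A (indVec T) c v ≤ rowSum A x c v := by
            rw [← rowSum_smul]
            exact rowSum_mono hbin hind c v
          rw [hycx]
          nlinarith [hε.le, hzc, hM0]
    | succ ℓ ih =>
        obtain ⟨H1, H2⟩ := ih
        constructor
        · intro v
          rw [ipaMu_succ' (y := y) hbin (Nv_nonempty hcol v) ℓ]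
          refine Finset.sup'_le _ _ fun c hc => max_le (hind0 v) ?_
          rw [key_sum hbin hy (mem_Nv.1 hc) (ipaM A y ℓ)]
          have hmono : rowSum A (fun v' => x v' - ipaM A y ℓ v') c v
              ≤ rowSum A (fun v' => ε * (indVec T v' - ipaM A z ℓ v')) c v := by
            refine rowSum_mono hbin (fun v' => ?_) c v
            have := H2 v'
            nlinarith [hε.le]
          have hsm : rowSum A (fun v' => ε * (indVec T v' - ipaM A z ℓ v')) c v
              = ε * (rowSum A (indVec T) c v - rowSum A (ipaM A z ℓ) c v) := by
            rw [← rowSum_sub, ← rowSum_smul]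
          have hzc : rowSum A (indVec T) c v = z c - indVec T v :=
            rowSum_indVec hbin (mem_Nv.1 hc) T
          have hcov : z c ≤ rowSum A (ipaM A z ℓ) c v := termatiko_check hbin hcol hT ℓ hc
          nlinarith [hε.le]
        · intro v
          rw [ipaM_succ' (y := y) hbin (Nv_nonempty hcol v) ℓ]
          refine Finset.le_inf' _ _ fun c hc => ?_
          rw [key_sum hbin hy (mem_Nv.1 hc) (ipaMu A y ℓ)]
          have hmono : rowSum A (fun v' => ε * indVec T v') c v
              ≤ rowSum A (fun v' => x v' - ipaMu A y ℓ v') c v := by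
            refine rowSum_mono hbin (fun v' => ?_) c v
            have := H1 v'
            linarith
          rw [rowSum_smul] at hmono
          have hzc : rowSum A (indVec T) c v = z c - indVec T v :=
            rowSum_indVec hbin (mem_Nv.1 hc) T
          have hM1 : ipaM A z (ℓ + 1) v ≤ z c := ipaM_le_measT hbin hcol hT (ℓ + 1) hc
          nlinarith [hε.le]
  obtain ⟨v, hv⟩ := hTne
  refine ⟨v, ?_⟩
  have h1 := (main ℓ).1 v
  have : indVec T v = 1 := by simp [indVec, hv]
  rw [this] at h1
  intro heq
  rw [heq] at h1
  linarith

end AuxIPA3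
section AuxIPA4
set_option linter.unusedSectionVars false

variable {A : C → V → ℝ} {y : C → ℝ} {x : V → ℝ} {T : Finset V}

/-- If the first IPA iteration on `A·1_T` keeps all lower bounds at zero, then so do
all iterations, i.e. `T` is a termatiko set. -/
lemma isTermatiko_of_one (hbin : Binary A) (hcol : NoZeroCol A)
    (h1 : ∀ v, ipaMu A (measT A T) 1 v = 0) : IsTermatiko A T := by
  have key : ∀ ℓ, (∀ v, ipaMu A (measT A T) ℓ v = 0) ∧
      (∀ v, ipaMu A (measT A T) (ℓ + 1) v = 0) := by
    intro ℓ
    induction ℓ with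
    | zero => exact ⟨fun v => ipaMu_zero v, h1⟩
    | succ ℓ ih =>
        refine ⟨ih.2, fun v => ?_⟩
        have hMeq : ∀ w, ipaM A (measT A T) (ℓ + 1) w = ipaM A (measT A T) 0 w := by
          intro w
          rw [ipaM_succ' hbin (Nv_nonempty hcol w) ℓ, ipaM_zero' hbin (Nv_nonempty hcol w)]
          exact Finset.inf'_congr _ rfl fun c _ => by
            rw [rowSum_eq_zero ih.1 c w, sub_zero]
        have h := h1 v
        rw [ipaMu_succ' hbin (Nv_nonempty hcol v) 0] at h
        rw [ipaMu_succ' hbin (Nv_nonempty hcol v) (ℓ + 1)]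
        refine Eq.trans (Finset.sup'_congr _ rfl fun c _ => ?_) h
        congr 1
        congr 1
        exact Finset.sum_congr rfl fun v' _ => by rw [hMeq v']
  exact fun ℓ v => (key ℓ).1 v

lemma ipaM_measT_zero (hbin : Binary A) (hcol : NoZeroCol A) (T : Finset V) (v : V) :
    ipaM A (measT A T) 0 v
      = (Nv A v).inf' (Nv_nonempty hcol v) (fun c => ((NTc A T c).card : ℝ)) := by
  rw [ipaM_zero' hbin (Nv_nonempty hcol v)]
  exact Finset.inf'_congr _ rfl fun c _ => measT_eq_card hbin T c

/-- The one-step termatiko criterion, from the "min-count" function `mR`. -/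
lemma isTermatiko_of_cond (hbin : Binary A) (hcol : NoZeroCol A)
    (hcond : ∀ v, ∀ c ∈ Nv A v, ((NTc A T c).card : ℝ)
      ≤ rowSum A (fun v' => ((Nv A v').inf' (Nv_nonempty hcol v')
          (fun c' => ((NTc A T c').card : ℝ)))) c v) : IsTermatiko A T := by
  refine isTermatiko_of_one hbin hcol fun v => ?_
  refine le_antisymm ?_ (ipaMu_nonneg hcol 1 v)
  rw [ipaMu_succ' hbin (Nv_nonempty hcol v) 0]
  refine Finset.sup'_le _ _ fun c hc => max_le le_rfl ?_
  have hrw : rowSum A (ipaM A (measT A T) 0) c v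
      = rowSum A (fun v' => ((Nv A v').inf' (Nv_nonempty hcol v')
          (fun c' => ((NTc A T c').card : ℝ)))) c v :=
    Finset.sum_congr rfl fun v' _ => by rw [ipaM_measT_zero hbin hcol T v']
  rw [measT_eq_card hbin T c, hrw]
  have := hcond v c hc
  linarith

end AuxIPA4
section AuxIPA5
set_option linter.unusedSectionVars false

variable {A : C → V → ℝ} {y : C → ℝ} {x : V → ℝ}

/-- The ⇒ direction: if the IPA fails forever, a nonempty termatiko set inside the
support exists. -/
lemma termatiko_of_fails (hbin : Binary A) (hcol : NoZeroCol A) (hx : ∀ v, 0 ≤ x v)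
    (hy : ∀ c, y c = ∑ v, A c v * x v)
    (hfail : ∀ ℓ : ℕ, ∃ v, ipaMu A y ℓ v ≠ x v) :
    ∃ T : Finset V, T.Nonempty ∧ IsTermatiko A T ∧ ∀ v ∈ T, x v ≠ 0 := by
  classical
  set Tl : ℕ → Finset V := fun ℓ => Finset.univ.filter (fun v => ipaMu A y ℓ v ≠ x v) with hTl
  have hmemTl : ∀ ℓ v, v ∈ Tl ℓ ↔ ipaMu A y ℓ v ≠ x v := by
    intro ℓ v; simp [hTl]
  have hsub : ∀ ℓ, Tl (ℓ + 1) ⊆ Tl ℓ := by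
    intro ℓ v hv
    rw [hmemTl] at hv ⊢
    intro heq
    apply hv
    refine le_antisymm ((ipa_bounds hbin hcol hx hy (ℓ + 1)).1 v) ?_
    calc x v = ipaMu A y ℓ v := heq.symm
    _ ≤ ipaMu A y (ℓ + 1) v := (ipa_mono hbin hcol ℓ).1 v
  have hsub2 : ∀ ℓ, Tl (ℓ + 2) ⊆ Tl ℓ := fun ℓ => (hsub (ℓ + 1)).trans (hsub ℓ)
  -- find a stabilization point L with Tl (L+2) = Tl L
  have hL : ∃ L, Tl (L + 2) = Tl L := by
    by_contra hcon
    push_neg at hcon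
    have hdec : ∀ L, (Tl (L + 2)).card < (Tl L).card := fun L =>
      Finset.card_lt_card (Finset.ssubset_iff_subset_ne.2 ⟨hsub2 L, hcon L⟩)
    have hk : ∀ k, (Tl (2 * k)).card + k ≤ (Tl 0).card := by
      intro k
      induction k with
      | zero => simp
      | succ k ih =>
          have h1 : (Tl (2 * k + 2)).card < (Tl (2 * k)).card := hdec (2 * k)
          have h2 : 2 * (k + 1) = 2 * k + 2 := by ring
          rw [h2]
          omega
    have := hk ((Tl 0).card + 1)
    omega
  obtain ⟨L, hLeq⟩ := hL
  set T : Finset V := Tl L with hTdef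
  have hTne : T.Nonempty := by
    obtain ⟨v, hv⟩ := hfail L
    exact ⟨v, (hmemTl L v).2 hv⟩
  have hμle : ∀ ℓ v, ipaMu A y ℓ v ≤ x v := fun ℓ => (ipa_bounds hbin hcol hx hy ℓ).1
  have hμlt : ∀ v ∈ T, ipaMu A y L v < x v := fun v hv =>
    lt_of_le_of_ne (hμle L v) ((hmemTl L v).1 hv)
  have hμeq : ∀ v, v ∉ T → ipaMu A y L v = x v := by
    intro v hv
    by_contra hne
    exact hv ((hmemTl L v).2 hne)
  have hμlt2 : ∀ v ∈ T, ipaMu A y (L + 2) v < x v := by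
    intro v hv
    rw [← hLeq] at hv
    exact lt_of_le_of_ne (hμle (L + 2) v) ((hmemTl (L + 2) v).1 hv)
  have hsupp : ∀ v ∈ T, x v ≠ 0 := by
    intro v hv hx0
    have h1 := hμlt v hv
    have h2 := ipaMu_nonneg (y := y) hcol L v
    rw [hx0] at h1
    linarith
  -- the scale Λ
  set Λ : ℝ := T.sup' hTne (fun v => x v - ipaMu A y L v) with hΛdef
  have hΛpos : 0 < Λ := by
    obtain ⟨v, hv⟩ := id hTne
    rw [hΛdef]
    exact lt_of_lt_of_le (by linarith [hμlt v hv]) (Finset.le_sup' (fun v => x v - ipaMu A y L v) hv)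
  have hδle : ∀ v, x v - ipaMu A y L v ≤ Λ * indVec T v := by
    intro v
    by_cases hv : v ∈ T
    · have hi : indVec T v = 1 := by simp [indVec, hv]
      rw [hi, mul_one]
      exact Finset.le_sup' (fun v => x v - ipaMu A y L v) hv
    · have hi : indVec T v = 0 := by simp [indVec, hv]
      rw [hi, mul_zero, hμeq v hv, sub_self]
  -- the min-count function
  set mR : V → ℝ := fun v => (Nv A v).inf' (Nv_nonempty hcol v)
    (fun c => ((NTc A T c).card : ℝ)) with hmRdef
  have hmR_le : ∀ v, ∀ c ∈ Nv A v, mR v ≤ ((NTc A T c).card : ℝ) := fun v c hc =>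
    Finset.inf'_le (fun c => ((NTc A T c).card : ℝ)) hc
  have hmR_ex : ∀ v, ∃ c ∈ Nv A v, mR v = ((NTc A T c).card : ℝ) := fun v =>
    Finset.exists_mem_eq_inf' (Nv_nonempty hcol v) (fun c => ((NTc A T c).card : ℝ))
  have hmR_ind : ∀ v, indVec T v ≤ mR v := by
    intro v
    by_cases hv : v ∈ T
    · have hi : indVec T v = 1 := by simp [indVec, hv]
      rw [hi]
      refine Finset.le_inf' _ _ fun c hc => ?_
      have hvc : v ∈ NTc A T c := Finset.mem_filter.2 ⟨hv, mem_Nv.1 hc⟩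
      have : 1 ≤ (NTc A T c).card := Finset.card_pos.2 ⟨v, hvc⟩
      exact_mod_cast this
    · have hi : indVec T v = 0 := by simp [indVec, hv]
      rw [hi]
      refine Finset.le_inf' _ _ fun c hc => ?_
      positivity
  -- step (b): upper bound on M^{L+1}
  have hD : ∀ v, ipaM A y (L + 1) v ≤ x v + Λ * (mR v - indVec T v) := by
    intro v
    obtain ⟨c, hc, hceq⟩ := hmR_ex v
    rw [ipaM_succ' (y := y) hbin (Nv_nonempty hcol v) L]
    refine le_trans (Finset.inf'_le (fun c => y c - rowSum A (ipaMu A y L) c v) hc) ?_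
    rw [key_sum hbin hy (mem_Nv.1 hc) (ipaMu A y L)]
    have hmono : rowSum A (fun v' => x v' - ipaMu A y L v') c v
        ≤ rowSum A (fun v' => Λ * indVec T v') c v := rowSum_mono hbin hδle c v
    rw [rowSum_smul] at hmono
    have hzc : rowSum A (indVec T) c v = measT A T c - indVec T v :=
      rowSum_indVec hbin (mem_Nv.1 hc) T
    rw [measT_eq_card hbin T c, ← hceq] at hzc
    nlinarith [hΛpos.le]
  -- step (c): strict positivity of the residual per check
  have hpos : ∀ v ∈ T, ∀ c ∈ Nv A v,
      0 < rowSum A (fun v' => ipaM A y (L + 1) v' - x v') c v := by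
    intro v hv c hc
    have hle : y c - rowSum A (ipaM A y (L + 1)) c v ≤ ipaMu A y (L + 2) v := by
      rw [ipaMu_succ' (y := y) hbin (Nv_nonempty hcol v) (L + 1)]
      exact le_trans (le_max_right 0 _)
        (Finset.le_sup' (fun c => max 0 (y c - rowSum A (ipaM A y (L + 1)) c v)) hc)
    rw [key_sum hbin hy (mem_Nv.1 hc) (ipaM A y (L + 1))] at hle
    have hlt := hμlt2 v hv
    have hsub' : rowSum A (fun v' => ipaM A y (L + 1) v' - x v') c v
        = - rowSum A (fun v' => x v' - ipaM A y (L + 1) v') c v := by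
      rw [rowSum_sub, rowSum_sub]; ring
    rw [hsub']
    linarith
  -- step (d): integrality gives the key counting inequality
  have hone : ∀ v ∈ T, ∀ c ∈ Nv A v,
      1 ≤ rowSum A (fun v' => mR v' - indVec T v') c v := by
    intro v hv c hc
    have h1 : rowSum A (fun v' => ipaM A y (L + 1) v' - x v') c v
        ≤ Λ * rowSum A (fun v' => mR v' - indVec T v') c v := by
      rw [← rowSum_smul]
      refine rowSum_mono hbin (fun v' => ?_) c v
      have := hD v'
      nlinarith [hΛpos.le]
    have h2 : 0 < rowSum A (fun v' => mR v' - indVec T v') c v := by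
      by_contra hcon
      push_neg at hcon
      have : Λ * rowSum A (fun v' => mR v' - indVec T v') c v ≤ 0 :=
        mul_nonpos_of_nonneg_of_nonpos hΛpos.le hcon
      linarith [hpos v hv c hc]
    -- some term is positive
    have hterm : ∃ v₀ ∈ Finset.univ.filter (fun v' => v' ≠ v),
        0 < A c v₀ * (mR v₀ - indVec T v₀) := by
      by_contra hcon
      push_neg at hcon
      have : rowSum A (fun v' => mR v' - indVec T v') c v ≤ 0 :=
        Finset.sum_nonpos fun v' hv' => hcon v' hv'
      linarith
    obtain ⟨v₀, hv₀mem, hv₀⟩ := hterm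
    have hA₀ : A c v₀ = 1 := by
      rcases hbin c v₀ with h | h
      · rw [h] at hv₀; simp at hv₀
      · exact h
    have hterm1 : 1 ≤ A c v₀ * (mR v₀ - indVec T v₀) := by
      rw [hA₀, one_mul] at hv₀ ⊢
      obtain ⟨c₀, hc₀, hceq₀⟩ := hmR_ex v₀
      by_cases hvT : v₀ ∈ T
      · have hind1 : indVec T v₀ = 1 := by simp [indVec, hvT]
        rw [hind1] at hv₀ ⊢
        rw [hceq₀] at hv₀ ⊢
        have : (1 : ℝ) < ((NTc A T c₀).card : ℝ) := by linarith
        have h2' : 2 ≤ (NTc A T c₀).card := by exact_mod_cast this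
        have : (2 : ℝ) ≤ ((NTc A T c₀).card : ℝ) := by exact_mod_cast h2'
        linarith
      · have hind0 : indVec T v₀ = 0 := by simp [indVec, hvT]
        rw [hind0, sub_zero] at hv₀ ⊢
        rw [hceq₀] at hv₀ ⊢
        have h1' : 0 < (NTc A T c₀).card := by exact_mod_cast hv₀
        have h2' : 1 ≤ (NTc A T c₀).card := h1'
        exact_mod_cast h2'
    refine le_trans hterm1 ?_
    have := Finset.single_le_sum (f := fun v' => A c v' * (mR v' - indVec T v'))
      (fun v' _ => mul_nonneg (Anonneg hbin c v') (by linarith [hmR_ind v'])) hv₀mem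
    exact this
  -- step (e): the termatiko condition
  refine ⟨T, hTne, ?_, hsupp⟩
  refine isTermatiko_of_cond hbin hcol fun v c hc => ?_
  have hzc : rowSum A (indVec T) c v = ((NTc A T c).card : ℝ) - indVec T v := by
    rw [rowSum_indVec hbin (mem_Nv.1 hc) T, measT_eq_card hbin T c]
  have hsplit : rowSum A mR c v
      = rowSum A (fun v' => mR v' - indVec T v') c v + rowSum A (indVec T) c v := by
    rw [rowSum_sub]; ring
  by_cases hv : v ∈ T
  · have h1 := hone v hv c hc
    have hind1 : indVec T v = 1 := by simp [indVec, hv]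
    rw [hsplit, hzc, hind1]
    linarith
  · have h0 : 0 ≤ rowSum A (fun v' => mR v' - indVec T v') c v :=
      rowSum_nonneg hbin (fun v' => by linarith [hmR_ind v']) c v
    have hind0 : indVec T v = 0 := by simp [indVec, hv]
    rw [hsplit, hzc, hind0]
    linarith

end AuxIPA5
/-- the IPA fails to fully recover `x` iff `supp(x)` contains a
nonempty termatiko set of `A`. -/
theorem ipa_fails_iff_termatiko {m n : ℕ} (A : Fin m → Fin n → ℝ)
    (hbin : Binary A) (hcol : NoZeroCol A)
    (x : Fin n → ℝ) (hx : ∀ v, 0 ≤ x v)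
    (y : Fin m → ℝ) (hy : ∀ c, y c = ∑ v, A c v * x v) :
    (∀ ℓ : ℕ, ∃ v : Fin n, ipaMu A y ℓ v ≠ x v) ↔
      ∃ T : Finset (Fin n), T.Nonempty ∧ IsTermatiko A T ∧ ∀ v ∈ T, x v ≠ 0 := by
  constructor
  · exact termatiko_of_fails hbin hcol hx hy
  · rintro ⟨T, hTne, hT, hTsupp⟩ ℓ
    exact fails_of_termatiko hbin hcol hx hy hTne hT hTsupp ℓ
end
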